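/- Let A, Â ∈ ℝ^{p×q} both have rank n, with σ_n(A) > 0 and σ_n(Â) ≥ σ_n(A)/2. Then ‖Â† − A†‖_F ≤ ‖Â − A‖_F · max{‖A†‖², ‖Â†‖²} ≤ (4/σ_n(A)²)·‖Â − A‖_F, where † denotes the Moore–Penrose pseudoinverse. -/

import Mathlib

open Matrix

/-- Euclidean norm of a finite-dimensional real vector. -/
noncomputable def vnorm {ι : Type*} [Fintype ι] (x : ι → ℝ) : ℝ :=
  Real.sqrt (∑ i, x i ^ 2)

/-- Frobenius norm of a real matrix. -/
noncomputable def frob {m n : ℕ} (A : Matrix (Fin m) (Fin n) ℝ) : ℝ :=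
  Real.sqrt (∑ i, ∑ j, A i j ^ 2)

/-- Spectral (operator) norm of a real matrix. -/
noncomputable def spec {m n : ℕ} (A : Matrix (Fin m) (Fin n) ℝ) : ℝ :=
  sSup {c : ℝ | ∃ x : Fin n → ℝ, vnorm x = 1 ∧ c = vnorm (A.mulVec x)}

/-- `k`-th largest singular value of a matrix, via the Courant–Fischer
max-min characterization. -/
noncomputable def singularValue {p q : ℕ} (A : Matrix (Fin p) (Fin q) ℝ) (k : ℕ) : ℝ :=
  sSup {c : ℝ | ∃ V : Submodule ℝ (Fin q → ℝ), Module.finrank ℝ V = k ∧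
    ∀ x ∈ V, c * vnorm x ≤ vnorm (A.mulVec x)}

/-- `B` is the Moore–Penrose pseudoinverse of `A` (the four Penrose equations). -/
def IsMoorePenrose {p q : ℕ} (A : Matrix (Fin p) (Fin q) ℝ)
    (B : Matrix (Fin q) (Fin p) ℝ) : Prop :=
  A * B * A = A ∧ B * A * B = B ∧ (A * B)ᵀ = A * B ∧ (B * A)ᵀ = B * A

lemma vnorm_nonneg {ι : Type*} [Fintype ι] (x : ι → ℝ) : 0 ≤ vnorm x :=
  Real.sqrt_nonneg _

lemma vnorm_sq {ι : Type*} [Fintype ι] (x : ι → ℝ) : vnorm x ^ 2 = ∑ i, x i ^ 2 :=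
  Real.sq_sqrt (by positivity)

lemma vnorm_eq_zero {ι : Type*} [Fintype ι] {x : ι → ℝ} (h : vnorm x = 0) : x = 0 := by
  have h2 : ∑ i, x i ^ 2 = 0 := by
    have := vnorm_sq x; rw [h] at this; simpa using this.symm
  funext i
  have := (Finset.sum_eq_zero_iff_of_nonneg (fun i _ => sq_nonneg (x i))).1 h2 i (by simp)
  exact pow_eq_zero_iff (by norm_num) |>.1 this

lemma vnorm_zero {ι : Type*} [Fintype ι] : vnorm (0 : ι → ℝ) = 0 := by
  simp [vnorm]

lemma vnorm_smul {ι : Type*} [Fintype ι] (c : ℝ) (x : ι → ℝ) :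
    vnorm (c • x) = |c| * vnorm x := by
  simp only [vnorm, Pi.smul_apply, smul_eq_mul, mul_pow, ← Finset.mul_sum]
  rw [Real.sqrt_mul (sq_nonneg c), Real.sqrt_sq_eq_abs]

lemma vnorm_le_of_sq_le {ι : Type*} [Fintype ι] {x : ι → ℝ} {a : ℝ} (ha : 0 ≤ a)
    (h : ∑ i, x i ^ 2 ≤ a ^ 2) : vnorm x ≤ a := by
  rw [vnorm]
  calc Real.sqrt (∑ i, x i ^ 2) ≤ Real.sqrt (a ^ 2) := Real.sqrt_le_sqrt h
  _ = a := Real.sqrt_sq ha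

lemma le_of_sq_le_sq' {a b : ℝ} (ha : 0 ≤ a) (hb : 0 ≤ b) (h : a ^ 2 ≤ b ^ 2) : a ≤ b := by
  nlinarith

-- Pythagoras for vectors
lemma vnorm_add_sq {ι : Type*} [Fintype ι] {x y : ι → ℝ} (h : x ⬝ᵥ y = 0) :
    vnorm (x + y) ^ 2 = vnorm x ^ 2 + vnorm y ^ 2 := by
  simp only [vnorm_sq, Pi.add_apply]
  have : ∑ i, (x i + y i) ^ 2 = ∑ i, x i ^ 2 + (2 * ∑ i, x i * y i) + ∑ i, y i ^ 2 := by
    rw [Finset.mul_sum, ← Finset.sum_add_distrib, ← Finset.sum_add_distrib]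
    exact Finset.sum_congr rfl (fun i _ => by ring)
  rw [this]
  simp only [dotProduct] at h
  rw [h]; ring

lemma dotProduct_le_vnorm {ι : Type*} [Fintype ι] (x y : ι → ℝ) :
    x ⬝ᵥ y ≤ vnorm x * vnorm y := by
  have cs := Finset.sum_mul_sq_le_sq_mul_sq Finset.univ x y
  have h1 : (x ⬝ᵥ y) ^ 2 ≤ (vnorm x * vnorm y) ^ 2 := by
    rw [mul_pow, vnorm_sq, vnorm_sq]; exact cs
  calc x ⬝ᵥ y ≤ |x ⬝ᵥ y| := le_abs_self _
  _ ≤ vnorm x * vnorm y := by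
      refine le_of_sq_le_sq' (abs_nonneg _) (mul_nonneg (vnorm_nonneg _) (vnorm_nonneg _)) ?_
      rwa [sq_abs]

lemma frob_nonneg {m n : ℕ} (M : Matrix (Fin m) (Fin n) ℝ) : 0 ≤ frob M :=
  Real.sqrt_nonneg _

lemma vnorm_mulVec_le_frob {m n : ℕ} (M : Matrix (Fin m) (Fin n) ℝ) (x : Fin n → ℝ) :
    vnorm (M.mulVec x) ≤ frob M * vnorm x := by
  refine vnorm_le_of_sq_le (mul_nonneg (frob_nonneg M) (vnorm_nonneg x)) ?_
  have key : ∀ i, (M.mulVec x i) ^ 2 ≤ (∑ j, M i j ^ 2) * ∑ j, x j ^ 2 := by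
    intro i
    simpa [Matrix.mulVec, dotProduct] using Finset.sum_mul_sq_le_sq_mul_sq Finset.univ (M i) x
  calc ∑ i, (M.mulVec x i) ^ 2 ≤ ∑ i, (∑ j, M i j ^ 2) * ∑ j, x j ^ 2 :=
        Finset.sum_le_sum (fun i _ => key i)
  _ = (∑ i, ∑ j, M i j ^ 2) * ∑ j, x j ^ 2 := by rw [Finset.sum_mul]
  _ = (frob M * vnorm x) ^ 2 := by
      rw [mul_pow, vnorm_sq, frob]
      rw [Real.sq_sqrt (by positivity)]


lemma spec_bddAbove {m n : ℕ} (M : Matrix (Fin m) (Fin n) ℝ) :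
    BddAbove {c : ℝ | ∃ x : Fin n → ℝ, vnorm x = 1 ∧ c = vnorm (M.mulVec x)} := by
  refine ⟨frob M, ?_⟩
  rintro c ⟨x, hx, rfl⟩
  calc vnorm (M.mulVec x) ≤ frob M * vnorm x := vnorm_mulVec_le_frob M x
  _ = frob M := by rw [hx, mul_one]

lemma spec_nonneg {m n : ℕ} (M : Matrix (Fin m) (Fin n) ℝ) : 0 ≤ spec M := by
  apply Real.sSup_nonneg
  rintro c ⟨x, hx, rfl⟩
  exact vnorm_nonneg _

lemma vnorm_mulVec_le_spec {m n : ℕ} (M : Matrix (Fin m) (Fin n) ℝ) (x : Fin n → ℝ) :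
    vnorm (M.mulVec x) ≤ spec M * vnorm x := by
  rcases eq_or_ne (vnorm x) 0 with h0 | h0
  · rw [vnorm_eq_zero h0]
    simp [Matrix.mulVec_zero, vnorm_zero, h0]
  · have ht : 0 < vnorm x := lt_of_le_of_ne (vnorm_nonneg x) (Ne.symm h0)
    set t := vnorm x with htdef
    have hu : vnorm (t⁻¹ • x) = 1 := by
      rw [vnorm_smul, abs_of_pos (inv_pos.2 ht)]
      field_simp
      exact htdef.symm
    have hmem : vnorm (M.mulVec (t⁻¹ • x)) ∈
        {c : ℝ | ∃ y : Fin n → ℝ, vnorm y = 1 ∧ c = vnorm (M.mulVec y)} :=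
      ⟨t⁻¹ • x, hu, rfl⟩
    have hle : vnorm (M.mulVec (t⁻¹ • x)) ≤ spec M := le_csSup (spec_bddAbove M) hmem
    rw [Matrix.mulVec_smul, vnorm_smul, abs_of_pos (inv_pos.2 ht)] at hle
    calc vnorm (M.mulVec x) = t * (t⁻¹ * vnorm (M.mulVec x)) := by field_simp
    _ ≤ t * spec M := by
        have := mul_le_mul_of_nonneg_left hle (le_of_lt ht)
        simpa [smul_eq_mul] using this
    _ = spec M * t := mul_comm _ _

lemma mulVec_transpose_dot {m n : ℕ} (M : Matrix (Fin m) (Fin n) ℝ) (y : Fin m → ℝ)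
    (z : Fin n → ℝ) : (Mᵀ.mulVec y) ⬝ᵥ z = y ⬝ᵥ (M.mulVec z) := by
  simp only [dotProduct, Matrix.mulVec, dotProduct, Matrix.transpose_apply,
    Finset.sum_mul, Finset.mul_sum]
  rw [Finset.sum_comm]
  exact Finset.sum_congr rfl (fun i _ => Finset.sum_congr rfl (fun j _ => by ring))

lemma spec_transpose_le {m n : ℕ} (M : Matrix (Fin m) (Fin n) ℝ) : spec Mᵀ ≤ spec M := by
  apply Real.sSup_le _ (spec_nonneg M)
  rintro c ⟨y, hy, rfl⟩
  set t := vnorm (Mᵀ.mulVec y) with htdef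
  have ht0 : 0 ≤ t := vnorm_nonneg _
  have key : t ^ 2 ≤ spec M * t := by
    have h1 : t ^ 2 = (Mᵀ.mulVec y) ⬝ᵥ (Mᵀ.mulVec y) := by
      rw [vnorm_sq]; simp [dotProduct, sq]
    rw [h1, mulVec_transpose_dot]
    calc y ⬝ᵥ (M.mulVec (Mᵀ.mulVec y)) ≤ vnorm y * vnorm (M.mulVec (Mᵀ.mulVec y)) :=
        dotProduct_le_vnorm _ _
    _ ≤ vnorm y * (spec M * t) := by
        exact mul_le_mul_of_nonneg_left (vnorm_mulVec_le_spec M _) (vnorm_nonneg _)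
    _ = spec M * t := by rw [hy, one_mul]
  rcases eq_or_lt_of_le ht0 with h | h
  · rw [← h]; exact spec_nonneg M
  · nlinarith

lemma spec_mul_le {m n k : ℕ} (M : Matrix (Fin m) (Fin n) ℝ) (N : Matrix (Fin n) (Fin k) ℝ) :
    spec (M * N) ≤ spec M * spec N := by
  apply Real.sSup_le _ (mul_nonneg (spec_nonneg M) (spec_nonneg N))
  rintro c ⟨x, hx, rfl⟩
  rw [← Matrix.mulVec_mulVec]
  calc vnorm (M.mulVec (N.mulVec x)) ≤ spec M * vnorm (N.mulVec x) := by
        simpa using vnorm_mulVec_le_spec M (N.mulVec x)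
  _ ≤ spec M * (spec N * vnorm x) :=
      mul_le_mul_of_nonneg_left (vnorm_mulVec_le_spec N x) (spec_nonneg M)
  _ = spec M * spec N := by rw [hx, mul_one]

-- projection contraction for vectors
lemma vnorm_proj_le {k : ℕ} (P : Matrix (Fin k) (Fin k) ℝ) (hPt : Pᵀ = P)
    (hPP : P * P = P) (v : Fin k → ℝ) : vnorm (P.mulVec v) ≤ vnorm v := by
  have h1 : ∀ w, (P.mulVec v) ⬝ᵥ w = v ⬝ᵥ (P.mulVec w) := by
    intro w
    conv_lhs => rw [← hPt]
    exact mulVec_transpose_dot P v w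
  have horth : (P.mulVec v) ⬝ᵥ (v - P.mulVec v) = 0 := by
    rw [h1, Matrix.mulVec_sub, Matrix.mulVec_mulVec, hPP, sub_self, dotProduct_zero]
  have hpyth : vnorm v ^ 2 = vnorm (P.mulVec v) ^ 2 + vnorm (v - P.mulVec v) ^ 2 := by
    have := vnorm_add_sq horth
    rwa [add_sub_cancel] at this
  refine le_of_sq_le_sq' (vnorm_nonneg _) (vnorm_nonneg _) ?_
  nlinarith [sq_nonneg (vnorm (v - P.mulVec v))]

lemma frob_sq {m n : ℕ} (M : Matrix (Fin m) (Fin n) ℝ) :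
    frob M ^ 2 = ∑ i, ∑ j, M i j ^ 2 := Real.sq_sqrt (by positivity)

lemma frob_transpose {m n : ℕ} (M : Matrix (Fin m) (Fin n) ℝ) : frob Mᵀ = frob M := by
  rw [frob, frob, Finset.sum_comm]
  rfl

lemma frob_neg {m n : ℕ} (M : Matrix (Fin m) (Fin n) ℝ) : frob (-M) = frob M := by
  simp [frob]

lemma frob_mul_le_left {m n k : ℕ} (M : Matrix (Fin m) (Fin n) ℝ)
    (X : Matrix (Fin n) (Fin k) ℝ) : frob (M * X) ≤ spec M * frob X := by
  refine le_of_sq_le_sq' (frob_nonneg _) (mul_nonneg (spec_nonneg M) (frob_nonneg X)) ?_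
  rw [frob_sq, mul_pow, frob_sq]
  have key : ∀ j, ∑ i, (M * X) i j ^ 2 ≤ spec M ^ 2 * ∑ i, X i j ^ 2 := by
    intro j
    have hcol : ∑ i, (M * X) i j ^ 2 = vnorm (M.mulVec (fun k => X k j)) ^ 2 := by
      rw [vnorm_sq]
      exact Finset.sum_congr rfl (fun i _ => by simp [Matrix.mul_apply, Matrix.mulVec, dotProduct])
    have hv : vnorm (fun k => X k j) ^ 2 = ∑ i, X i j ^ 2 := vnorm_sq _
    have h := vnorm_mulVec_le_spec M (fun k => X k j)
    have h0 := vnorm_nonneg (M.mulVec (fun k => X k j))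
    have h1 := mul_self_le_mul_self h0 h
    rw [hcol, ← hv]
    nlinarith
  calc ∑ i, ∑ j, (M * X) i j ^ 2 = ∑ j, ∑ i, (M * X) i j ^ 2 := Finset.sum_comm
  _ ≤ ∑ j, spec M ^ 2 * ∑ i, X i j ^ 2 := Finset.sum_le_sum (fun j _ => key j)
  _ = spec M ^ 2 * ∑ j, ∑ i, X i j ^ 2 := (Finset.mul_sum _ _ _).symm
  _ = spec M ^ 2 * ∑ i, ∑ j, X i j ^ 2 := by rw [Finset.sum_comm]

lemma frob_mul_le_right {m n k : ℕ} (X : Matrix (Fin m) (Fin n) ℝ)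
    (M : Matrix (Fin n) (Fin k) ℝ) : frob (X * M) ≤ frob X * spec M := by
  rw [← frob_transpose (X * M), Matrix.transpose_mul]
  calc frob (Mᵀ * Xᵀ) ≤ spec Mᵀ * frob Xᵀ := frob_mul_le_left _ _
  _ ≤ spec M * frob X := by
      rw [frob_transpose]
      exact mul_le_mul_of_nonneg_right (spec_transpose_le M) (frob_nonneg X)
  _ = frob X * spec M := mul_comm _ _

noncomputable def finner {m n : ℕ} (X Y : Matrix (Fin m) (Fin n) ℝ) : ℝ :=
  ∑ i, ∑ j, X i j * Y i j

lemma frob_sq_eq_finner {m n : ℕ} (X : Matrix (Fin m) (Fin n) ℝ) :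
    frob X ^ 2 = finner X X := by
  rw [frob_sq, finner]
  exact Finset.sum_congr rfl (fun i _ => Finset.sum_congr rfl (fun j _ => (sq (X i j)) ▸ (pow_two (X i j))))

lemma finner_add_left {m n : ℕ} (X Y Z : Matrix (Fin m) (Fin n) ℝ) :
    finner (X + Y) Z = finner X Z + finner Y Z := by
  simp only [finner, Matrix.add_apply, add_mul, Finset.sum_add_distrib]

lemma finner_comm {m n : ℕ} (X Y : Matrix (Fin m) (Fin n) ℝ) : finner X Y = finner Y X := by
  simp only [finner, mul_comm]

lemma frob_add_sq {m n : ℕ} {X Y : Matrix (Fin m) (Fin n) ℝ} (h : finner X Y = 0) :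
    frob (X + Y) ^ 2 = frob X ^ 2 + frob Y ^ 2 := by
  simp only [frob_sq, Matrix.add_apply, finner] at *
  have expand : ∀ i j, (X i j + Y i j) ^ 2 = X i j ^ 2 + 2 * (X i j * Y i j) + Y i j ^ 2 :=
    fun i j => by ring
  simp only [expand, Finset.sum_add_distrib]
  have h2 : ∑ i, ∑ j, 2 * (X i j * Y i j) = 2 * ∑ i, ∑ j, X i j * Y i j := by
    simp only [Finset.mul_sum]
  rw [h2, h]
  ring

lemma finner_mul_left {m n k : ℕ} (P : Matrix (Fin m) (Fin k) ℝ)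
    (X : Matrix (Fin k) (Fin n) ℝ) (Y : Matrix (Fin m) (Fin n) ℝ) :
    finner (P * X) Y = finner X (Pᵀ * Y) := by
  calc finner (P * X) Y = ∑ i, ∑ j, ∑ l, P i l * X l j * Y i j := by
        simp only [finner, Matrix.mul_apply, Finset.sum_mul]
  _ = ∑ i, ∑ l, ∑ j, P i l * X l j * Y i j :=
      Finset.sum_congr rfl (fun i _ => Finset.sum_comm)
  _ = ∑ l, ∑ i, ∑ j, P i l * X l j * Y i j := Finset.sum_comm
  _ = ∑ l, ∑ j, ∑ i, P i l * X l j * Y i j :=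
      Finset.sum_congr rfl (fun l _ => Finset.sum_comm)
  _ = finner X (Pᵀ * Y) := by
      simp only [finner, Matrix.mul_apply, Matrix.transpose_apply, Finset.mul_sum]
      exact Finset.sum_congr rfl (fun l _ => Finset.sum_congr rfl (fun j _ =>
        Finset.sum_congr rfl (fun i _ => by ring)))

lemma finner_mul_right {m n k : ℕ} (X : Matrix (Fin m) (Fin k) ℝ)
    (Q : Matrix (Fin k) (Fin n) ℝ) (Y : Matrix (Fin m) (Fin n) ℝ) :
    finner (X * Q) Y = finner X (Y * Qᵀ) := by
  calc finner (X * Q) Y = ∑ i, ∑ j, ∑ l, X i l * Q l j * Y i j := by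
        simp only [finner, Matrix.mul_apply, Finset.sum_mul]
  _ = ∑ i, ∑ l, ∑ j, X i l * Q l j * Y i j :=
      Finset.sum_congr rfl (fun i _ => Finset.sum_comm)
  _ = finner X (Y * Qᵀ) := by
      simp only [finner, Matrix.mul_apply, Matrix.transpose_apply, Finset.mul_sum]
      exact Finset.sum_congr rfl (fun i _ => Finset.sum_congr rfl (fun l _ =>
        Finset.sum_congr rfl (fun j _ => by ring)))

lemma finner_zero_right {m n : ℕ} (X : Matrix (Fin m) (Fin n) ℝ) :
    finner X (0 : Matrix (Fin m) (Fin n) ℝ) = 0 := by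
  simp [finner, Matrix.zero_apply]

-- orthogonality via left projections
lemma finner_left_orth {m n : ℕ} {P Q : Matrix (Fin m) (Fin m) ℝ}
    (h : Pᵀ * Q = 0) (X Y : Matrix (Fin m) (Fin n) ℝ) :
    finner (P * X) (Q * Y) = 0 := by
  rw [finner_mul_left, ← Matrix.mul_assoc, h, Matrix.zero_mul, finner_zero_right]

lemma finner_right_orth {m n : ℕ} {P Q : Matrix (Fin n) (Fin n) ℝ}
    (h : Q * Pᵀ = 0) (X Y : Matrix (Fin m) (Fin n) ℝ) :
    finner (X * P) (Y * Q) = 0 := by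
  rw [finner_mul_right, Matrix.mul_assoc, h, Matrix.mul_zero, finner_zero_right]

lemma frob_three_split {m n : ℕ} {X Y Z W : Matrix (Fin m) (Fin n) ℝ}
    (hW : W = X + Y + Z) (h12 : finner X Y = 0) (h13 : finner X Z = 0)
    (h23 : finner Y Z = 0) :
    frob W ^ 2 = frob X ^ 2 + frob Y ^ 2 + frob Z ^ 2 := by
  have h3 : finner (X + Y) Z = 0 := by rw [finner_add_left, h13, h23]; ring
  rw [hW, frob_add_sq h3, frob_add_sq h12]

lemma frob_block_decomp {m n : ℕ} (P : Matrix (Fin m) (Fin m) ℝ)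
    (Q : Matrix (Fin n) (Fin n) ℝ) (E : Matrix (Fin m) (Fin n) ℝ)
    (hPt : Pᵀ = P) (hPP : P * P = P) (hQt : Qᵀ = Q) (hQQ : Q * Q = Q)
    (h0 : (1 - P) * E * (1 - Q) = 0) :
    frob E ^ 2 = frob (P * E * Q) ^ 2 + frob ((1 - P) * E * Q) ^ 2
      + frob (P * E * (1 - Q)) ^ 2 := by
  have hP0 : Pᵀ * (1 - P) = 0 := by
    rw [hPt, Matrix.mul_sub, Matrix.mul_one, hPP, sub_self]
  have hP0' : (1 - P)ᵀ * P = 0 := by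
    rw [Matrix.transpose_sub, Matrix.transpose_one, hPt, Matrix.sub_mul, Matrix.one_mul,
      hPP, sub_self]
  have hQ0 : (1 - Q) * Qᵀ = 0 := by
    rw [hQt, Matrix.sub_mul, Matrix.one_mul, hQQ, sub_self]
  have hsum : E = P * E * Q + (1 - P) * E * Q + P * E * (1 - Q) := by
    have : P * E * Q + (1 - P) * E * Q + P * E * (1 - Q) + (1 - P) * E * (1 - Q) = E := by
      simp only [Matrix.sub_mul, Matrix.mul_sub, Matrix.one_mul, Matrix.mul_one]
      abel
    rw [h0, add_zero] at this
    exact this.symm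
  refine frob_three_split hsum ?_ ?_ ?_
  · rw [Matrix.mul_assoc P E Q, Matrix.mul_assoc (1 - P) E Q]
    exact finner_left_orth hP0 _ _
  · exact finner_right_orth hQ0 _ _
  · rw [Matrix.mul_assoc (1 - P) E Q, Matrix.mul_assoc P E (1 - Q)]
    exact finner_left_orth hP0' _ _

lemma spec_pinv_le {p q n : ℕ} (A : Matrix (Fin p) (Fin q) ℝ) (D : Matrix (Fin q) (Fin p) ℝ)
    (h : IsMoorePenrose A D) (hr : A.rank = n) (hσ : 0 < singularValue A n) :
    spec D ≤ 1 / singularValue A n := by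
  obtain ⟨h1, h2, h3, h4⟩ := h
  set σ := singularValue A n with hσdef
  have hADi : (A * D) * (A * D) = A * D := by
    rw [← Matrix.mul_assoc (A * D) A D, h1]
  have hDAi : (D * A) * (D * A) = D * A := by
    rw [← Matrix.mul_assoc (D * A) D A, h2]
  refine Real.sSup_le ?_ (div_nonneg zero_le_one hσ.le)
  rintro c ⟨x, hx, rfl⟩
  set t := vnorm (D.mulVec x) with htdef
  have ht0 : 0 ≤ t := vnorm_nonneg _
  rw [le_div_iff₀ hσ]
  have key : ∀ c' ∈ {c : ℝ | ∃ V : Submodule ℝ (Fin q → ℝ), Module.finrank ℝ V = n ∧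
      ∀ y ∈ V, c * vnorm y ≤ vnorm (A.mulVec y)}, c' * t ≤ 1 := by
    rintro c' ⟨V, hVrank, hV⟩
    rcases le_or_gt c' 0 with hc | hc
    · calc c' * t ≤ 0 := mul_nonpos_of_nonpos_of_nonneg hc ht0
      _ ≤ 1 := zero_le_one
    · set f := A.mulVecLin with hfdef
      have hinj : Function.Injective (f.comp V.subtype) := by
        rw [← LinearMap.ker_eq_bot, Submodule.eq_bot_iff]
        intro v hv
        have hv0 : A.mulVec v.1 = 0 := by
          simpa [hfdef, Matrix.mulVecLin_apply] using (LinearMap.mem_ker.1 hv)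
        have h5 := hV v.1 v.2
        rw [hv0, vnorm_zero] at h5
        have hvn : vnorm v.1 ≤ 0 := by nlinarith [vnorm_nonneg v.1]
        exact Subtype.ext (vnorm_eq_zero (le_antisymm hvn (vnorm_nonneg _)))
      have hrange : LinearMap.range (f.comp V.subtype) = V.map f := by
        rw [LinearMap.range_comp, Submodule.range_subtype]
      have hfr : Module.finrank ℝ (V.map f) = n := by
        rw [← hrange, LinearMap.finrank_range_of_inj hinj, hVrank]
      have hle : V.map f ≤ LinearMap.range f := by
        rintro y ⟨v, hv, rfl⟩; exact ⟨v, rfl⟩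
      have hrank : Module.finrank ℝ (LinearMap.range f) = n := by rw [← hr]; rfl
      have heq : V.map f = LinearMap.range f :=
        Submodule.eq_of_le_of_finrank_le hle (by rw [hfr, hrank])
      have hmem : A.mulVec (D.mulVec x) ∈ V.map f := by
        rw [heq]
        exact ⟨D.mulVec x, by simp [hfdef, Matrix.mulVecLin_apply]⟩
      obtain ⟨v, hvV, hfv⟩ := hmem
      have hAv : A.mulVec v = A.mulVec (D.mulVec x) := by
        simpa [hfdef, Matrix.mulVecLin_apply] using hfv
      have hw_proj : (D * A).mulVec (D.mulVec x) = D.mulVec x := by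
        rw [Matrix.mulVec_mulVec, h2]
      have hwv : (D * A).mulVec v = D.mulVec x := by
        rw [← Matrix.mulVec_mulVec, hAv, Matrix.mulVec_mulVec, hw_proj]
      have ht_le : t ≤ vnorm v := by
        rw [htdef, ← hwv]
        exact vnorm_proj_le (D * A) h4 hDAi v
      have hchain : vnorm (A.mulVec v) ≤ 1 := by
        rw [hAv, Matrix.mulVec_mulVec]
        calc vnorm ((A * D).mulVec x) ≤ vnorm x := vnorm_proj_le (A * D) h3 hADi x
        _ = 1 := hx
      calc c' * t ≤ c' * vnorm v := mul_le_mul_of_nonneg_left ht_le hc.le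
      _ ≤ vnorm (A.mulVec v) := hV v hvV
      _ ≤ 1 := hchain
  rcases eq_or_lt_of_le ht0 with h | h
  · rw [← h, zero_mul]; exact zero_le_one
  · have hσle : σ ≤ 1 / t := by
      rw [hσdef]
      exact Real.sSup_le (fun c' hc' => (le_div_iff₀ h).2 (key c' hc'))
        (div_nonneg zero_le_one ht0)
    calc t * σ ≤ t * (1 / t) := mul_le_mul_of_nonneg_left hσle ht0
    _ = 1 := by field_simp

set_option maxHeartbeats 1000000 in
/-- Wedin-type pseudoinverse perturbation bound: for rank-`n` matrices `A, Â`
with `σ_n(A) > 0` and `σ_n(Â) ≥ σ_n(A)/2`,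
`‖Â† − A†‖_F ≤ ‖Â − A‖_F · max{‖A†‖², ‖Â†‖²} ≤ (4/σ_n(A)²) ‖Â − A‖_F`. -/
theorem pinv_perturbation {p q n : ℕ} (A Ahat : Matrix (Fin p) (Fin q) ℝ)
    (Ad Ahatd : Matrix (Fin q) (Fin p) ℝ)
    (hA : IsMoorePenrose A Ad) (hAhat : IsMoorePenrose Ahat Ahatd)
    (hrA : A.rank = n) (hrAhat : Ahat.rank = n)
    (hσ : 0 < singularValue A n)
    (hσ2 : singularValue A n / 2 ≤ singularValue Ahat n) :
    frob (Ahatd - Ad) ≤ frob (Ahat - A) * max (spec Ad ^ 2) (spec Ahatd ^ 2) ∧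
      frob (Ahat - A) * max (spec Ad ^ 2) (spec Ahatd ^ 2) ≤
        (4 / singularValue A n ^ 2) * frob (Ahat - A) := by
  obtain ⟨a1, a2, a3, a4⟩ := hA
  obtain ⟨b1, b2, b3, b4⟩ := hAhat
  -- idempotents
  have hADi : (A * Ad) * (A * Ad) = A * Ad := by
    rw [← Matrix.mul_assoc (A * Ad) A Ad, a1]
  have hDAi : (Ad * A) * (Ad * A) = Ad * A := by
    rw [← Matrix.mul_assoc (Ad * A) Ad A, a2]
  have hHBi : (Ahat * Ahatd) * (Ahat * Ahatd) = Ahat * Ahatd := by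
    rw [← Matrix.mul_assoc (Ahat * Ahatd) Ahat Ahatd, b1]
  have hBHi : (Ahatd * Ahat) * (Ahatd * Ahat) = Ahatd * Ahat := by
    rw [← Matrix.mul_assoc (Ahatd * Ahat) Ahatd Ahat, b2]
  -- zero blocks
  have hz1 : Ahat * (1 - Ahatd * Ahat) = 0 := by
    rw [Matrix.mul_sub, Matrix.mul_one, ← Matrix.mul_assoc, b1, sub_self]
  have hz2 : (1 - A * Ad) * A = 0 := by
    rw [Matrix.sub_mul, Matrix.one_mul, a1, sub_self]
  have hz3 : (1 - Ahat * Ahatd) * Ahat = 0 := by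
    rw [Matrix.sub_mul, Matrix.one_mul, b1, sub_self]
  have hz4 : A * (1 - Ad * A) = 0 := by
    rw [Matrix.mul_sub, Matrix.mul_one, ← Matrix.mul_assoc, a1, sub_self]
  have zero1 : (1 - A * Ad) * (Ahat - A) * (1 - Ahatd * Ahat) = 0 := by
    have h : (1 - A * Ad) * (Ahat - A) = (1 - A * Ad) * Ahat := by
      rw [Matrix.mul_sub, hz2, sub_zero]
    rw [h, Matrix.mul_assoc, hz1, Matrix.mul_zero]
  have zero2 : (1 - Ahat * Ahatd) * (Ahat - A) * (1 - Ad * A) = 0 := by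
    have h : (1 - Ahat * Ahatd) * (Ahat - A) = -((1 - Ahat * Ahatd) * A) := by
      rw [Matrix.mul_sub, hz3, zero_sub]
    rw [h, Matrix.neg_mul, Matrix.mul_assoc, hz4, Matrix.mul_zero, neg_zero]
  -- transpose helpers
  have hBBA : Ahatd * Ahatdᵀ * Ahatᵀ = Ahatd := by
    calc Ahatd * Ahatdᵀ * Ahatᵀ = Ahatd * (Ahatdᵀ * Ahatᵀ) := Matrix.mul_assoc _ _ _
    _ = Ahatd * (Ahat * Ahatd)ᵀ := by rw [← Matrix.transpose_mul]
    _ = Ahatd * (Ahat * Ahatd) := by rw [b3]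
    _ = Ahatd * Ahat * Ahatd := (Matrix.mul_assoc _ _ _).symm
    _ = Ahatd := b2
  have hDDA : Ad * Adᵀ * Aᵀ = Ad := by
    calc Ad * Adᵀ * Aᵀ = Ad * (Adᵀ * Aᵀ) := Matrix.mul_assoc _ _ _
    _ = Ad * (A * Ad)ᵀ := by rw [← Matrix.transpose_mul]
    _ = Ad * (A * Ad) := by rw [a3]
    _ = Ad * A * Ad := (Matrix.mul_assoc _ _ _).symm
    _ = Ad := a2
  have hAt0 : Aᵀ * (1 - A * Ad) = 0 := by
    rw [Matrix.mul_sub, Matrix.mul_one, ← a3, ← Matrix.transpose_mul, a1, sub_self]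
  have hAht0 : Ahatᵀ * (1 - Ahat * Ahatd) = 0 := by
    rw [Matrix.mul_sub, Matrix.mul_one, ← b3, ← Matrix.transpose_mul, b1, sub_self]
  have hHT : Ahatd * Ahat * Ahatᵀ = Ahatᵀ := by
    rw [← b4, ← Matrix.transpose_mul, ← Matrix.mul_assoc, b1]
  have hAT : Ad * A * Aᵀ = Aᵀ := by
    rw [← a4, ← Matrix.transpose_mul, ← Matrix.mul_assoc, a1]
  have hAht1 : (1 - Ahatd * Ahat) * Ahatᵀ = 0 := by
    rw [Matrix.sub_mul, Matrix.one_mul, hHT, sub_self]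
  have hAt1 : (1 - Ad * A) * Aᵀ = 0 := by
    rw [Matrix.sub_mul, Matrix.one_mul, hAT, sub_self]
  have hDfac : Aᵀ * (Adᵀ * Ad) = Ad := by
    rw [← Matrix.mul_assoc, ← Matrix.transpose_mul, a4, a2]
  have hBfac : Ahatᵀ * (Ahatdᵀ * Ahatd) = Ahatd := by
    rw [← Matrix.mul_assoc, ← Matrix.transpose_mul, b4, b2]
  -- identity 1 pieces
  have e1 : Ahatd * Ahatdᵀ * (Ahat - A)ᵀ * (1 - A * Ad) = Ahatd * (1 - A * Ad) := by
    rw [Matrix.transpose_sub]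
    rw [Matrix.mul_sub (Ahatd * Ahatdᵀ), Matrix.sub_mul]
    rw [Matrix.mul_assoc (Ahatd * Ahatdᵀ) Aᵀ (1 - A * Ad), hAt0, Matrix.mul_zero, sub_zero,
      hBBA]
  have e2 : (1 - Ahatd * Ahat) * (Ahat - A)ᵀ * (Adᵀ * Ad) = -((1 - Ahatd * Ahat) * Ad) := by
    rw [Matrix.transpose_sub]
    rw [Matrix.mul_sub (1 - Ahatd * Ahat), Matrix.sub_mul, hAht1, Matrix.zero_mul, zero_sub]
    rw [Matrix.mul_assoc (1 - Ahatd * Ahat) Aᵀ (Adᵀ * Ad), hDfac]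
  have f1 : Ad * Adᵀ * (Ahat - A)ᵀ * (1 - Ahat * Ahatd) = -(Ad * (1 - Ahat * Ahatd)) := by
    rw [Matrix.transpose_sub]
    rw [Matrix.mul_sub (Ad * Adᵀ), Matrix.sub_mul]
    rw [Matrix.mul_assoc (Ad * Adᵀ) Ahatᵀ (1 - Ahat * Ahatd), hAht0, Matrix.mul_zero, zero_sub,
      hDDA]
  have f2 : (1 - Ad * A) * (Ahat - A)ᵀ * (Ahatdᵀ * Ahatd) = (1 - Ad * A) * Ahatd := by
    rw [Matrix.transpose_sub]
    rw [Matrix.mul_sub (1 - Ad * A), Matrix.sub_mul, hAt1, Matrix.zero_mul, sub_zero]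
    rw [Matrix.mul_assoc (1 - Ad * A) Ahatᵀ (Ahatdᵀ * Ahatd), hBfac]
  -- the two Wedin identities
  have id1 : Ahatd - Ad = -(Ahatd * (Ahat - A) * Ad)
      + Ahatd * Ahatdᵀ * (Ahat - A)ᵀ * (1 - A * Ad)
      + (1 - Ahatd * Ahat) * (Ahat - A)ᵀ * (Adᵀ * Ad) := by
    rw [e1, e2]
    simp only [Matrix.mul_sub, Matrix.sub_mul, Matrix.mul_one, Matrix.one_mul,
      Matrix.mul_assoc]
    abel
  have id2 : Ahatd - Ad = -(Ad * (Ahat - A) * Ahatd)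
      + Ad * Adᵀ * (Ahat - A)ᵀ * (1 - Ahat * Ahatd)
      + (1 - Ad * A) * (Ahat - A)ᵀ * (Ahatdᵀ * Ahatd) := by
    rw [f1, f2]
    simp only [Matrix.mul_sub, Matrix.sub_mul, Matrix.mul_one, Matrix.one_mul,
      Matrix.mul_assoc]
    abel
  -- orthogonality conditions
  have cR1 : (1 - A * Ad) * (A * Ad)ᵀ = 0 := by
    rw [a3, Matrix.sub_mul, Matrix.one_mul, hADi, sub_self]
  have cL1 : (Ahatd * Ahat)ᵀ * (1 - Ahatd * Ahat) = 0 := by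
    rw [b4, Matrix.mul_sub, Matrix.mul_one, hBHi, sub_self]
  have cR2 : (1 - Ahat * Ahatd) * (Ahat * Ahatd)ᵀ = 0 := by
    rw [b3, Matrix.sub_mul, Matrix.one_mul, hHBi, sub_self]
  have cL2 : (Ad * A)ᵀ * (1 - Ad * A) = 0 := by
    rw [a4, Matrix.mul_sub, Matrix.mul_one, hDAi, sub_self]
  -- T-term re-expressions for orthogonality
  have hDAD : Ad * (A * Ad) = Ad := by rw [← Matrix.mul_assoc, a2]
  have hT1r : (-(Ahatd * (Ahat - A) * Ad)) * (A * Ad) = -(Ahatd * (Ahat - A) * Ad) := by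
    rw [Matrix.neg_mul, Matrix.mul_assoc (Ahatd * (Ahat - A)) Ad (A * Ad), hDAD]
  have o12 : finner (-(Ahatd * (Ahat - A) * Ad))
      (Ahatd * Ahatdᵀ * (Ahat - A)ᵀ * (1 - A * Ad)) = 0 := by
    rw [← hT1r]
    exact finner_right_orth cR1 _ _
  have hT1l : (Ahatd * Ahat) * (-(Ahatd * ((Ahat - A) * Ad))) = -(Ahatd * (Ahat - A) * Ad) := by
    rw [Matrix.mul_neg, ← Matrix.mul_assoc, b2, Matrix.mul_assoc]
  have hT3l : (1 - Ahatd * Ahat) * ((Ahat - A)ᵀ * (Adᵀ * Ad))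
      = (1 - Ahatd * Ahat) * (Ahat - A)ᵀ * (Adᵀ * Ad) := by
    rw [Matrix.mul_assoc]
  have o13 : finner (-(Ahatd * (Ahat - A) * Ad))
      ((1 - Ahatd * Ahat) * (Ahat - A)ᵀ * (Adᵀ * Ad)) = 0 := by
    rw [← hT1l, ← hT3l]
    exact finner_left_orth cL1 _ _
  have hT2l : (Ahatd * Ahat) * (Ahatd * (Ahatdᵀ * ((Ahat - A)ᵀ * (1 - A * Ad))))
      = Ahatd * Ahatdᵀ * (Ahat - A)ᵀ * (1 - A * Ad) := by
    simp only [← Matrix.mul_assoc]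
    rw [b2]
  have o23 : finner (Ahatd * Ahatdᵀ * (Ahat - A)ᵀ * (1 - A * Ad))
      ((1 - Ahatd * Ahat) * (Ahat - A)ᵀ * (Adᵀ * Ad)) = 0 := by
    rw [← hT2l, ← hT3l]
    exact finner_left_orth cL1 _ _
  -- S-term orthogonality
  have hBAB : Ahatd * (Ahat * Ahatd) = Ahatd := by rw [← Matrix.mul_assoc, b2]
  have hS1r : (-(Ad * (Ahat - A) * Ahatd)) * (Ahat * Ahatd)
      = -(Ad * (Ahat - A) * Ahatd) := by
    rw [Matrix.neg_mul, Matrix.mul_assoc (Ad * (Ahat - A)) Ahatd (Ahat * Ahatd), hBAB]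
  have o12' : finner (-(Ad * (Ahat - A) * Ahatd))
      (Ad * Adᵀ * (Ahat - A)ᵀ * (1 - Ahat * Ahatd)) = 0 := by
    rw [← hS1r]
    exact finner_right_orth cR2 _ _
  have hS1l : (Ad * A) * (-(Ad * ((Ahat - A) * Ahatd))) = -(Ad * (Ahat - A) * Ahatd) := by
    rw [Matrix.mul_neg, ← Matrix.mul_assoc, a2, Matrix.mul_assoc]
  have hS3l : (1 - Ad * A) * ((Ahat - A)ᵀ * (Ahatdᵀ * Ahatd))
      = (1 - Ad * A) * (Ahat - A)ᵀ * (Ahatdᵀ * Ahatd) := by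
    rw [Matrix.mul_assoc]
  have o13' : finner (-(Ad * (Ahat - A) * Ahatd))
      ((1 - Ad * A) * (Ahat - A)ᵀ * (Ahatdᵀ * Ahatd)) = 0 := by
    rw [← hS1l, ← hS3l]
    exact finner_left_orth cL2 _ _
  have hS2l : (Ad * A) * (Ad * (Adᵀ * ((Ahat - A)ᵀ * (1 - Ahat * Ahatd))))
      = Ad * Adᵀ * (Ahat - A)ᵀ * (1 - Ahat * Ahatd) := by
    simp only [← Matrix.mul_assoc]
    rw [a2]
  have o23' : finner (Ad * Adᵀ * (Ahat - A)ᵀ * (1 - Ahat * Ahatd))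
      ((1 - Ad * A) * (Ahat - A)ᵀ * (Ahatdᵀ * Ahatd)) = 0 := by
    rw [← hS2l, ← hS3l]
    exact finner_left_orth cL2 _ _
  -- Pythagoras splits
  have split1 : frob (Ahatd - Ad) ^ 2 = frob (-(Ahatd * (Ahat - A) * Ad)) ^ 2
      + frob (Ahatd * Ahatdᵀ * (Ahat - A)ᵀ * (1 - A * Ad)) ^ 2
      + frob ((1 - Ahatd * Ahat) * (Ahat - A)ᵀ * (Adᵀ * Ad)) ^ 2 :=
    frob_three_split id1 o12 o13 o23
  have split2 : frob (Ahatd - Ad) ^ 2 = frob (-(Ad * (Ahat - A) * Ahatd)) ^ 2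
      + frob (Ad * Adᵀ * (Ahat - A)ᵀ * (1 - Ahat * Ahatd)) ^ 2
      + frob ((1 - Ad * A) * (Ahat - A)ᵀ * (Ahatdᵀ * Ahatd)) ^ 2 :=
    frob_three_split id2 o12' o13' o23'
  -- E block decompositions
  have dec1 : frob (Ahat - A) ^ 2 = frob (A * Ad * (Ahat - A) * (Ahatd * Ahat)) ^ 2
      + frob ((1 - A * Ad) * (Ahat - A) * (Ahatd * Ahat)) ^ 2
      + frob (A * Ad * (Ahat - A) * (1 - Ahatd * Ahat)) ^ 2 :=
    frob_block_decomp (A * Ad) (Ahatd * Ahat) (Ahat - A) a3 hADi b4 hBHi zero1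
  have dec2 : frob (Ahat - A) ^ 2 = frob (Ahat * Ahatd * (Ahat - A) * (Ad * A)) ^ 2
      + frob ((1 - Ahat * Ahatd) * (Ahat - A) * (Ad * A)) ^ 2
      + frob (Ahat * Ahatd * (Ahat - A) * (1 - Ad * A)) ^ 2 :=
    frob_block_decomp (Ahat * Ahatd) (Ad * A) (Ahat - A) b3 hHBi a4 hDAi zero2
  -- symmetric-projection transposes
  have h1AD : (1 - A * Ad)ᵀ = 1 - A * Ad := by
    rw [Matrix.transpose_sub, Matrix.transpose_one, a3]
  have h1DA : (1 - Ad * A)ᵀ = 1 - Ad * A := by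
    rw [Matrix.transpose_sub, Matrix.transpose_one, a4]
  have h1HB : (1 - Ahat * Ahatd)ᵀ = 1 - Ahat * Ahatd := by
    rw [Matrix.transpose_sub, Matrix.transpose_one, b3]
  have h1BH : (1 - Ahatd * Ahat)ᵀ = 1 - Ahatd * Ahat := by
    rw [Matrix.transpose_sub, Matrix.transpose_one, b4]
  -- bound for T1
  have hNe : Ahatd * (Ahat * Ahatd * (Ahat - A) * (Ad * A) * Ad)
      = Ahatd * (Ahat - A) * Ad := by
    simp only [← Matrix.mul_assoc]
    rw [b2, Matrix.mul_assoc (Ahatd * (Ahat - A)) Ad A,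
      Matrix.mul_assoc (Ahatd * (Ahat - A)) (Ad * A) Ad, a2]
  have bT1 : frob (-(Ahatd * (Ahat - A) * Ad))
      ≤ spec Ahatd * (frob (Ahat * Ahatd * (Ahat - A) * (Ad * A)) * spec Ad) := by
    calc frob (-(Ahatd * (Ahat - A) * Ad)) = frob (Ahatd * (Ahat - A) * Ad) := frob_neg _
    _ = frob (Ahatd * (Ahat * Ahatd * (Ahat - A) * (Ad * A) * Ad)) :=
        (congrArg frob hNe).symm
    _ ≤ spec Ahatd * frob (Ahat * Ahatd * (Ahat - A) * (Ad * A) * Ad) :=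
        frob_mul_le_left _ _
    _ ≤ spec Ahatd * (frob (Ahat * Ahatd * (Ahat - A) * (Ad * A)) * spec Ad) :=
        mul_le_mul_of_nonneg_left (frob_mul_le_right _ _) (spec_nonneg _)
  -- bound for T2
  have hBt : Ahatdᵀ * (Ahatd * Ahat) = Ahatdᵀ := by
    rw [← b4, ← Matrix.transpose_mul, b2]
  have htr2 : ((1 - A * Ad) * (Ahat - A) * (Ahatd * Ahat))ᵀ
      = (Ahatd * Ahat) * ((Ahat - A)ᵀ * (1 - A * Ad)) := by
    rw [Matrix.transpose_mul, b4, Matrix.transpose_mul, h1AD]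
  have hT2e : Ahatd * (Ahatdᵀ * ((1 - A * Ad) * (Ahat - A) * (Ahatd * Ahat))ᵀ)
      = Ahatd * Ahatdᵀ * (Ahat - A)ᵀ * (1 - A * Ad) := by
    rw [htr2, ← Matrix.mul_assoc Ahatdᵀ (Ahatd * Ahat) _, hBt]
    simp only [← Matrix.mul_assoc]
  have bT2 : frob (Ahatd * Ahatdᵀ * (Ahat - A)ᵀ * (1 - A * Ad))
      ≤ spec Ahatd * (spec Ahatd * frob ((1 - A * Ad) * (Ahat - A) * (Ahatd * Ahat))) := by
    calc frob (Ahatd * Ahatdᵀ * (Ahat - A)ᵀ * (1 - A * Ad))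
        = frob (Ahatd * (Ahatdᵀ * ((1 - A * Ad) * (Ahat - A) * (Ahatd * Ahat))ᵀ)) :=
        (congrArg frob hT2e).symm
    _ ≤ spec Ahatd * frob (Ahatdᵀ * ((1 - A * Ad) * (Ahat - A) * (Ahatd * Ahat))ᵀ) :=
        frob_mul_le_left _ _
    _ ≤ spec Ahatd * (spec Ahatdᵀ * frob (((1 - A * Ad) * (Ahat - A) * (Ahatd * Ahat))ᵀ)) :=
        mul_le_mul_of_nonneg_left (frob_mul_le_left _ _) (spec_nonneg _)
    _ ≤ spec Ahatd * (spec Ahatd * frob ((1 - A * Ad) * (Ahat - A) * (Ahatd * Ahat))) := by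
        rw [frob_transpose]
        exact mul_le_mul_of_nonneg_left
          (mul_le_mul_of_nonneg_right (spec_transpose_le _) (frob_nonneg _)) (spec_nonneg _)
  -- bound for T3
  have hADDt : A * Ad * Adᵀ = Adᵀ := by
    rw [← a3, ← Matrix.transpose_mul, ← Matrix.mul_assoc, a2]
  have htr3 : (A * Ad * (Ahat - A) * (1 - Ahatd * Ahat))ᵀ
      = (1 - Ahatd * Ahat) * ((Ahat - A)ᵀ * (A * Ad)) := by
    rw [Matrix.transpose_mul, h1BH, Matrix.transpose_mul, a3]
  have hT3e : (A * Ad * (Ahat - A) * (1 - Ahatd * Ahat))ᵀ * (Adᵀ * Ad)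
      = (1 - Ahatd * Ahat) * (Ahat - A)ᵀ * (Adᵀ * Ad) := by
    rw [htr3]
    have hmid : ((Ahat - A)ᵀ * (A * Ad)) * (Adᵀ * Ad) = (Ahat - A)ᵀ * (Adᵀ * Ad) := by
      rw [Matrix.mul_assoc (Ahat - A)ᵀ (A * Ad) (Adᵀ * Ad),
        ← Matrix.mul_assoc (A * Ad) Adᵀ Ad, hADDt]
    rw [Matrix.mul_assoc (1 - Ahatd * Ahat) ((Ahat - A)ᵀ * (A * Ad)) (Adᵀ * Ad), hmid,
      ← Matrix.mul_assoc]
  have bT3 : frob ((1 - Ahatd * Ahat) * (Ahat - A)ᵀ * (Adᵀ * Ad))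
      ≤ frob (A * Ad * (Ahat - A) * (1 - Ahatd * Ahat)) * (spec Ad * spec Ad) := by
    calc frob ((1 - Ahatd * Ahat) * (Ahat - A)ᵀ * (Adᵀ * Ad))
        = frob ((A * Ad * (Ahat - A) * (1 - Ahatd * Ahat))ᵀ * (Adᵀ * Ad)) :=
        (congrArg frob hT3e).symm
    _ ≤ frob ((A * Ad * (Ahat - A) * (1 - Ahatd * Ahat))ᵀ) * spec (Adᵀ * Ad) :=
        frob_mul_le_right _ _
    _ ≤ frob (A * Ad * (Ahat - A) * (1 - Ahatd * Ahat)) * (spec Ad * spec Ad) := by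
        rw [frob_transpose]
        refine mul_le_mul_of_nonneg_left ?_ (frob_nonneg _)
        calc spec (Adᵀ * Ad) ≤ spec Adᵀ * spec Ad := spec_mul_le _ _
        _ ≤ spec Ad * spec Ad :=
            mul_le_mul_of_nonneg_right (spec_transpose_le _) (spec_nonneg _)
  -- bound for S1
  have hN11 : Ad * (A * Ad * (Ahat - A) * (Ahatd * Ahat) * Ahatd)
      = Ad * (Ahat - A) * Ahatd := by
    simp only [← Matrix.mul_assoc]
    rw [a2, Matrix.mul_assoc (Ad * (Ahat - A)) Ahatd Ahat,
      Matrix.mul_assoc (Ad * (Ahat - A)) (Ahatd * Ahat) Ahatd, b2]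
  have bS1 : frob (-(Ad * (Ahat - A) * Ahatd))
      ≤ spec Ad * (frob (A * Ad * (Ahat - A) * (Ahatd * Ahat)) * spec Ahatd) := by
    calc frob (-(Ad * (Ahat - A) * Ahatd)) = frob (Ad * (Ahat - A) * Ahatd) := frob_neg _
    _ = frob (Ad * (A * Ad * (Ahat - A) * (Ahatd * Ahat) * Ahatd)) :=
        (congrArg frob hN11).symm
    _ ≤ spec Ad * frob (A * Ad * (Ahat - A) * (Ahatd * Ahat) * Ahatd) :=
        frob_mul_le_left _ _
    _ ≤ spec Ad * (frob (A * Ad * (Ahat - A) * (Ahatd * Ahat)) * spec Ahatd) :=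
        mul_le_mul_of_nonneg_left (frob_mul_le_right _ _) (spec_nonneg _)
  -- bound for S2
  have hDt : Adᵀ * (Ad * A) = Adᵀ := by
    rw [← a4, ← Matrix.transpose_mul, a2]
  have htr4 : ((1 - Ahat * Ahatd) * (Ahat - A) * (Ad * A))ᵀ
      = (Ad * A) * ((Ahat - A)ᵀ * (1 - Ahat * Ahatd)) := by
    rw [Matrix.transpose_mul, a4, Matrix.transpose_mul, h1HB]
  have hS2e : Ad * (Adᵀ * ((1 - Ahat * Ahatd) * (Ahat - A) * (Ad * A))ᵀ)
      = Ad * Adᵀ * (Ahat - A)ᵀ * (1 - Ahat * Ahatd) := by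
    rw [htr4, ← Matrix.mul_assoc Adᵀ (Ad * A) _, hDt]
    simp only [← Matrix.mul_assoc]
  have bS2 : frob (Ad * Adᵀ * (Ahat - A)ᵀ * (1 - Ahat * Ahatd))
      ≤ spec Ad * (spec Ad * frob ((1 - Ahat * Ahatd) * (Ahat - A) * (Ad * A))) := by
    calc frob (Ad * Adᵀ * (Ahat - A)ᵀ * (1 - Ahat * Ahatd))
        = frob (Ad * (Adᵀ * ((1 - Ahat * Ahatd) * (Ahat - A) * (Ad * A))ᵀ)) :=
        (congrArg frob hS2e).symm
    _ ≤ spec Ad * frob (Adᵀ * ((1 - Ahat * Ahatd) * (Ahat - A) * (Ad * A))ᵀ) :=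
        frob_mul_le_left _ _
    _ ≤ spec Ad * (spec Adᵀ * frob (((1 - Ahat * Ahatd) * (Ahat - A) * (Ad * A))ᵀ)) :=
        mul_le_mul_of_nonneg_left (frob_mul_le_left _ _) (spec_nonneg _)
    _ ≤ spec Ad * (spec Ad * frob ((1 - Ahat * Ahatd) * (Ahat - A) * (Ad * A))) := by
        rw [frob_transpose]
        exact mul_le_mul_of_nonneg_left
          (mul_le_mul_of_nonneg_right (spec_transpose_le _) (frob_nonneg _)) (spec_nonneg _)
  -- bound for S3
  have hHBBt : Ahat * Ahatd * Ahatdᵀ = Ahatdᵀ := by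
    rw [← b3, ← Matrix.transpose_mul, ← Matrix.mul_assoc, b2]
  have htr5 : (Ahat * Ahatd * (Ahat - A) * (1 - Ad * A))ᵀ
      = (1 - Ad * A) * ((Ahat - A)ᵀ * (Ahat * Ahatd)) := by
    rw [Matrix.transpose_mul, h1DA, Matrix.transpose_mul, b3]
  have hS3e : (Ahat * Ahatd * (Ahat - A) * (1 - Ad * A))ᵀ * (Ahatdᵀ * Ahatd)
      = (1 - Ad * A) * (Ahat - A)ᵀ * (Ahatdᵀ * Ahatd) := by
    rw [htr5]
    have hmid : ((Ahat - A)ᵀ * (Ahat * Ahatd)) * (Ahatdᵀ * Ahatd)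
        = (Ahat - A)ᵀ * (Ahatdᵀ * Ahatd) := by
      rw [Matrix.mul_assoc (Ahat - A)ᵀ (Ahat * Ahatd) (Ahatdᵀ * Ahatd),
        ← Matrix.mul_assoc (Ahat * Ahatd) Ahatdᵀ Ahatd, hHBBt]
    rw [Matrix.mul_assoc (1 - Ad * A) ((Ahat - A)ᵀ * (Ahat * Ahatd)) (Ahatdᵀ * Ahatd), hmid,
      ← Matrix.mul_assoc]
  have bS3 : frob ((1 - Ad * A) * (Ahat - A)ᵀ * (Ahatdᵀ * Ahatd))
      ≤ frob (Ahat * Ahatd * (Ahat - A) * (1 - Ad * A)) * (spec Ahatd * spec Ahatd) := by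
    calc frob ((1 - Ad * A) * (Ahat - A)ᵀ * (Ahatdᵀ * Ahatd))
        = frob ((Ahat * Ahatd * (Ahat - A) * (1 - Ad * A))ᵀ * (Ahatdᵀ * Ahatd)) :=
        (congrArg frob hS3e).symm
    _ ≤ frob ((Ahat * Ahatd * (Ahat - A) * (1 - Ad * A))ᵀ) * spec (Ahatdᵀ * Ahatd) :=
        frob_mul_le_right _ _
    _ ≤ frob (Ahat * Ahatd * (Ahat - A) * (1 - Ad * A)) * (spec Ahatd * spec Ahatd) := by
        rw [frob_transpose]
        refine mul_le_mul_of_nonneg_left ?_ (frob_nonneg _)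
        calc spec (Ahatdᵀ * Ahatd) ≤ spec Ahatdᵀ * spec Ahatd := spec_mul_le _ _
        _ ≤ spec Ahatd * spec Ahatd :=
            mul_le_mul_of_nonneg_right (spec_transpose_le _) (spec_nonneg _)
  -- arithmetic combination
  set dd := spec Ad with hdd
  set bb := spec Ahatd with hbb
  have hdd0 : 0 ≤ dd := spec_nonneg _
  have hbb0 : 0 ≤ bb := spec_nonneg _
  set m := max (dd ^ 2) (bb ^ 2) with hm
  set fE := frob (Ahat - A) with hfE
  set fBD := frob (Ahatd - Ad) with hfBD
  set t1 := frob (-(Ahatd * (Ahat - A) * Ad)) with ht1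
  set t2 := frob (Ahatd * Ahatdᵀ * (Ahat - A)ᵀ * (1 - A * Ad)) with ht2
  set t3 := frob ((1 - Ahatd * Ahat) * (Ahat - A)ᵀ * (Adᵀ * Ad)) with ht3
  set s1 := frob (-(Ad * (Ahat - A) * Ahatd)) with hs1
  set s2 := frob (Ad * Adᵀ * (Ahat - A)ᵀ * (1 - Ahat * Ahatd)) with hs2
  set s3 := frob ((1 - Ad * A) * (Ahat - A)ᵀ * (Ahatdᵀ * Ahatd)) with hs3
  set g11 := frob (A * Ad * (Ahat - A) * (Ahatd * Ahat)) with hg11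
  set g21 := frob ((1 - A * Ad) * (Ahat - A) * (Ahatd * Ahat)) with hg21
  set g12 := frob (A * Ad * (Ahat - A) * (1 - Ahatd * Ahat)) with hg12
  set k11 := frob (Ahat * Ahatd * (Ahat - A) * (Ad * A)) with hk11
  set k21 := frob ((1 - Ahat * Ahatd) * (Ahat - A) * (Ad * A)) with hk21
  set k12 := frob (Ahat * Ahatd * (Ahat - A) * (1 - Ad * A)) with hk12
  have ht10 : 0 ≤ t1 := frob_nonneg _
  have ht20 : 0 ≤ t2 := frob_nonneg _
  have ht30 : 0 ≤ t3 := frob_nonneg _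
  have hs10 : 0 ≤ s1 := frob_nonneg _
  have hs20 : 0 ≤ s2 := frob_nonneg _
  have hs30 : 0 ≤ s3 := frob_nonneg _
  have hg110 : 0 ≤ g11 := frob_nonneg _
  have hg210 : 0 ≤ g21 := frob_nonneg _
  have hg120 : 0 ≤ g12 := frob_nonneg _
  have hk110 : 0 ≤ k11 := frob_nonneg _
  have hk210 : 0 ≤ k21 := frob_nonneg _
  have hk120 : 0 ≤ k12 := frob_nonneg _
  have hfE0 : 0 ≤ fE := frob_nonneg _
  have hfBD0 : 0 ≤ fBD := frob_nonneg _
  have hd2 : dd ^ 2 ≤ m := le_max_left _ _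
  have hb2 : bb ^ 2 ≤ m := le_max_right _ _
  have hm0 : 0 ≤ m := le_trans (sq_nonneg _) hd2
  have q1b := bT1
  have q2b := bT2
  have q3b := bT3
  have q4b := bS1
  have q5b := bS2
  have q6b := bS3
  have q1 : t1 ^ 2 ≤ m ^ 2 * k11 ^ 2 := by
    calc t1 ^ 2 ≤ (bb * (k11 * dd)) ^ 2 := pow_le_pow_left₀ ht10 q1b 2
    _ = (bb ^ 2 * dd ^ 2) * k11 ^ 2 := by ring
    _ ≤ (m * m) * k11 ^ 2 :=
        mul_le_mul_of_nonneg_right (mul_le_mul hb2 hd2 (sq_nonneg _) hm0) (sq_nonneg _)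
    _ = m ^ 2 * k11 ^ 2 := by ring
  have q2 : t2 ^ 2 ≤ m ^ 2 * g21 ^ 2 := by
    calc t2 ^ 2 ≤ (bb * (bb * g21)) ^ 2 := pow_le_pow_left₀ ht20 q2b 2
    _ = (bb ^ 2 * bb ^ 2) * g21 ^ 2 := by ring
    _ ≤ (m * m) * g21 ^ 2 :=
        mul_le_mul_of_nonneg_right (mul_le_mul hb2 hb2 (sq_nonneg _) hm0) (sq_nonneg _)
    _ = m ^ 2 * g21 ^ 2 := by ring
  have q3 : t3 ^ 2 ≤ m ^ 2 * g12 ^ 2 := by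
    calc t3 ^ 2 ≤ (g12 * (dd * dd)) ^ 2 := pow_le_pow_left₀ ht30 q3b 2
    _ = (dd ^ 2 * dd ^ 2) * g12 ^ 2 := by ring
    _ ≤ (m * m) * g12 ^ 2 :=
        mul_le_mul_of_nonneg_right (mul_le_mul hd2 hd2 (sq_nonneg _) hm0) (sq_nonneg _)
    _ = m ^ 2 * g12 ^ 2 := by ring
  have q4 : s1 ^ 2 ≤ m ^ 2 * g11 ^ 2 := by
    calc s1 ^ 2 ≤ (dd * (g11 * bb)) ^ 2 := pow_le_pow_left₀ hs10 q4b 2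
    _ = (dd ^ 2 * bb ^ 2) * g11 ^ 2 := by ring
    _ ≤ (m * m) * g11 ^ 2 :=
        mul_le_mul_of_nonneg_right (mul_le_mul hd2 hb2 (sq_nonneg _) hm0) (sq_nonneg _)
    _ = m ^ 2 * g11 ^ 2 := by ring
  have q5 : s2 ^ 2 ≤ m ^ 2 * k21 ^ 2 := by
    calc s2 ^ 2 ≤ (dd * (dd * k21)) ^ 2 := pow_le_pow_left₀ hs20 q5b 2
    _ = (dd ^ 2 * dd ^ 2) * k21 ^ 2 := by ring
    _ ≤ (m * m) * k21 ^ 2 :=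
        mul_le_mul_of_nonneg_right (mul_le_mul hd2 hd2 (sq_nonneg _) hm0) (sq_nonneg _)
    _ = m ^ 2 * k21 ^ 2 := by ring
  have q6 : s3 ^ 2 ≤ m ^ 2 * k12 ^ 2 := by
    calc s3 ^ 2 ≤ (k12 * (bb * bb)) ^ 2 := pow_le_pow_left₀ hs30 q6b 2
    _ = (bb ^ 2 * bb ^ 2) * k12 ^ 2 := by ring
    _ ≤ (m * m) * k12 ^ 2 :=
        mul_le_mul_of_nonneg_right (mul_le_mul hb2 hb2 (sq_nonneg _) hm0) (sq_nonneg _)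
    _ = m ^ 2 * k12 ^ 2 := by ring
  have dd1 : m ^ 2 * fE ^ 2 = m ^ 2 * g11 ^ 2 + m ^ 2 * g21 ^ 2 + m ^ 2 * g12 ^ 2 := by
    rw [dec1]; ring
  have dd2 : m ^ 2 * fE ^ 2 = m ^ 2 * k11 ^ 2 + m ^ 2 * k21 ^ 2 + m ^ 2 * k12 ^ 2 := by
    rw [dec2]; ring
  have key : fBD ^ 2 ≤ m ^ 2 * fE ^ 2 := by
    linarith only [split1, split2, q1, q2, q3, q4, q5, q6, dd1, dd2]
  have first : fBD ≤ fE * m := by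
    refine le_of_sq_le_sq' hfBD0 (mul_nonneg hfE0 hm0) ?_
    calc fBD ^ 2 ≤ m ^ 2 * fE ^ 2 := key
    _ = (fE * m) ^ 2 := by ring
  -- second part
  have hσh : 0 < singularValue Ahat n := lt_of_lt_of_le (half_pos hσ) hσ2
  have hd1 : dd ≤ 1 / singularValue A n := spec_pinv_le A Ad ⟨a1, a2, a3, a4⟩ hrA hσ
  have hb1 : bb ≤ 1 / singularValue Ahat n :=
    spec_pinv_le Ahat Ahatd ⟨b1, b2, b3, b4⟩ hrAhat hσh
  have hbb2 : 1 / singularValue Ahat n ≤ 2 / singularValue A n := by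
    rw [div_le_div_iff₀ hσh hσ]
    linarith only [hσ2, hσh]
  have hdsq : dd ^ 2 ≤ 4 / singularValue A n ^ 2 := by
    have h : dd ^ 2 ≤ (1 / singularValue A n) ^ 2 := pow_le_pow_left₀ hdd0 hd1 2
    have h2 : (1 / singularValue A n) ^ 2 ≤ 4 / singularValue A n ^ 2 := by
      rw [div_pow, one_pow]
      rw [div_le_div_iff₀ (pow_pos hσ 2) (pow_pos hσ 2)]
      linarith only [pow_pos hσ 2]
    linarith only [h, h2]
  have hbsq : bb ^ 2 ≤ 4 / singularValue A n ^ 2 := by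
    have h1 : bb ≤ 2 / singularValue A n := le_trans hb1 hbb2
    have h : bb ^ 2 ≤ (2 / singularValue A n) ^ 2 := pow_le_pow_left₀ hbb0 h1 2
    have h2 : (2 / singularValue A n) ^ 2 = 4 / singularValue A n ^ 2 := by
      rw [div_pow]; norm_num
    linarith only [h, h2]
  have hmax : m ≤ 4 / singularValue A n ^ 2 := max_le hdsq hbsq
  refine ⟨first, ?_⟩
  calc fE * m ≤ fE * (4 / singularValue A n ^ 2) :=
      mul_le_mul_of_nonneg_left hmax hfE0
  _ = (4 / singularValue A n ^ 2) * fE := mul_comm _ _
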